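/- arXiv:math/9810072 — 6 statements merged into one kernel-verified Lean document; each statement's English description precedes it below -/
import Mathlib

section
/- For any topological space (X, 𝒯), the family of semi-open sets of (X, 𝒯^α) coincides with the family of semi-open sets of (X, 𝒯), i.e. SO(X, 𝒯^α) = SO(X, 𝒯). -/
open Set TopologicalSpace

universe u v

variable {X : Type u} {Y : Type v}

/-- A set is an α-set (α-open) w.r.t. the topology `T` if `A ⊆ Int (Cl (Int A))`. -/
def AlphaOpen (T : TopologicalSpace X) (A : Set X) : Prop :=
  letI := T
  A ⊆ interior (closure (interior A))

/-- The α-topology `𝒯^α`, whose open sets are exactly the α-sets of `T`. -/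
def alphaTop (T : TopologicalSpace X) : TopologicalSpace X :=
  letI := T
  { IsOpen := fun A => A ⊆ interior (closure (interior A))
    isOpen_univ := by simp
    isOpen_inter := by
      intro A B hA hB
      have hsub : interior (closure (interior A)) ∩ interior (closure (interior B)) ⊆
          closure (interior (A ∩ B)) := by
        intro x hx
        have h1 : interior (closure (interior B)) ∩ closure (interior A) ⊆
            closure (interior (closure (interior B)) ∩ interior A) :=
          isOpen_interior.inter_closure
        have h2 : interior (closure (interior B)) ∩ interior A ⊆
            closure (interior A ∩ interior B) := by
          intro y hy
          have h : interior A ∩ closure (interior B) ⊆ closure (interior A ∩ interior B) :=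
            isOpen_interior.inter_closure
          exact h ⟨hy.2, interior_subset hy.1⟩
        have h3 : closure (interior (closure (interior B)) ∩ interior A) ⊆
            closure (interior A ∩ interior B) := by
          calc closure (interior (closure (interior B)) ∩ interior A)
              ⊆ closure (closure (interior A ∩ interior B)) := closure_mono h2
            _ = closure (interior A ∩ interior B) := closure_closure
        have hx' : x ∈ closure (interior A ∩ interior B) :=
          h3 (h1 ⟨hx.2, interior_subset hx.1⟩)
        rwa [← interior_inter] at hx'
      intro x hx
      exact interior_maximal hsub (isOpen_interior.inter isOpen_interior) ⟨hA hx.1, hB hx.2⟩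
    isOpen_sUnion := by
      intro S hS x hx
      obtain ⟨t, htS, hxt⟩ := hx
      have h : interior (closure (interior t)) ⊆ interior (closure (interior (⋃₀ S))) :=
        interior_mono (closure_mono (interior_mono (subset_sUnion_of_mem htS)))
      exact h (hS t htS hxt) }

/-- `A` is semi-open w.r.t. `T` if `A ⊆ Cl (Int A)`. -/
def SemiOpen (T : TopologicalSpace X) (A : Set X) : Prop :=
  letI := T
  A ⊆ closure (interior A)

/-- `A` is semi-closed if its complement is semi-open. -/
def SemiClosed (T : TopologicalSpace X) (A : Set X) : Prop :=
  SemiOpen T Aᶜ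

/-- The semi-closure of `A`: the intersection of all semi-closed sets containing `A`. -/
def sCl (T : TopologicalSpace X) (A : Set X) : Set X :=
  ⋂₀ {C | SemiClosed T C ∧ A ⊆ C}

/-- `A` is sg-closed if `sCl A ⊆ U` whenever `A ⊆ U` with `U` semi-open. -/
def SgClosed (T : TopologicalSpace X) (A : Set X) : Prop :=
  ∀ U : Set X, SemiOpen T U → A ⊆ U → sCl T A ⊆ U

/-- `A` is sg-open if its complement is sg-closed. -/
def SgOpen (T : TopologicalSpace X) (A : Set X) : Prop :=
  SgClosed T Aᶜ

/-- `A` is regular closed w.r.t. `T` if `A = Cl (Int A)`. -/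
def RegClosed (T : TopologicalSpace X) (A : Set X) : Prop :=
  letI := T
  A = closure (interior A)

/-- A family `𝒱` refines a family `𝒰` if every member of `𝒱` is contained in a member of `𝒰`. -/
def Refines (𝒱 𝒰 : Set (Set X)) : Prop :=
  ∀ V ∈ 𝒱, ∃ U ∈ 𝒰, V ⊆ U

/-- A family of sets is locally finite if every point has a neighbourhood
meeting only finitely many members. -/
def LocFinite (T : TopologicalSpace X) (𝒱 : Set (Set X)) : Prop :=
  ∀ x : X, ∃ N ∈ @nhds X T x, {V ∈ 𝒱 | (V ∩ N).Nonempty}.Finite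

/-- A family of sets is locally countable if every point has a neighbourhood
meeting only countably many members. -/
def LocCountable (T : TopologicalSpace X) (𝒱 : Set (Set X)) : Prop :=
  ∀ x : X, ∃ N ∈ @nhds X T x, {V ∈ 𝒱 | (V ∩ N).Nonempty}.Countable

/-- A family of sets is discrete if every point has a neighbourhood
meeting at most one member. -/
def DiscreteFam (T : TopologicalSpace X) (𝒱 : Set (Set X)) : Prop :=
  ∀ x : X, ∃ N ∈ @nhds X T x, {V ∈ 𝒱 | (V ∩ N).Nonempty}.Subsingleton

/-- A family is σ-discrete if it is a countable union of discrete families. -/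
def SigmaDiscrete (T : TopologicalSpace X) (𝒱 : Set (Set X)) : Prop :=
  ∃ 𝒲 : ℕ → Set (Set X), 𝒱 = ⋃ n, 𝒲 n ∧ ∀ n, DiscreteFam T (𝒲 n)

/-- A family is closure-preserving if for every subfamily the closure of the
union is the union of the closures. -/
def ClosurePreserving (T : TopologicalSpace X) (𝒲 : Set (Set X)) : Prop :=
  letI := T
  ∀ 𝒲' ⊆ 𝒲, closure (⋃₀ 𝒲') = ⋃ W ∈ 𝒲', closure W

/-- A family is σ-closure-preserving if it is a countable union of
closure-preserving families. -/
def SigmaClosurePreserving (T : TopologicalSpace X) (𝒱 : Set (Set X)) : Prop :=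
  ∃ 𝒲 : ℕ → Set (Set X), 𝒱 = ⋃ n, 𝒲 n ∧ ∀ n, ClosurePreserving T (𝒲 n)

/-- Semi-compact: every semi-open cover has a finite subcover. -/
def SemiCompact (T : TopologicalSpace X) : Prop :=
  ∀ 𝒰 : Set (Set X), (∀ U ∈ 𝒰, SemiOpen T U) → ⋃₀ 𝒰 = univ →
    ∃ 𝒱 ⊆ 𝒰, 𝒱.Finite ∧ ⋃₀ 𝒱 = univ

/-- S-closed: for every semi-open cover there is a finite subfamily
whose closures cover. -/
def SClosed (T : TopologicalSpace X) : Prop :=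
  letI := T
  ∀ 𝒰 : Set (Set X), (∀ U ∈ 𝒰, SemiOpen T U) → ⋃₀ 𝒰 = univ →
    ∃ 𝒱 ⊆ 𝒰, 𝒱.Finite ∧ (⋃ V ∈ 𝒱, closure V) = univ

/-- s-closed: for every semi-open cover there is a finite subfamily
whose semi-closures cover. -/
def SmallSClosed (T : TopologicalSpace X) : Prop :=
  ∀ 𝒰 : Set (Set X), (∀ U ∈ 𝒰, SemiOpen T U) → ⋃₀ 𝒰 = univ →
    ∃ 𝒱 ⊆ 𝒰, 𝒱.Finite ∧ (⋃ V ∈ 𝒱, sCl T V) = univ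

/-- rc-Lindelöf: every regular closed cover has a countable subcover. -/
def RcLindelof (T : TopologicalSpace X) : Prop :=
  ∀ 𝒰 : Set (Set X), (∀ U ∈ 𝒰, RegClosed T U) → ⋃₀ 𝒰 = univ →
    ∃ 𝒱 ⊆ 𝒰, 𝒱.Countable ∧ ⋃₀ 𝒱 = univ

/-- sg-compact: every sg-open cover has a finite subcover. -/
def SgCompact (T : TopologicalSpace X) : Prop :=
  ∀ 𝒰 : Set (Set X), (∀ U ∈ 𝒰, SgOpen T U) → ⋃₀ 𝒰 = univ →
    ∃ 𝒱 ⊆ 𝒰, 𝒱.Finite ∧ ⋃₀ 𝒱 = univ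

/-- `A` is S-closed relative to `X`: every cover of `A` by semi-open sets of `X`
has a finite subfamily whose closures cover `A`. -/
def SClosedRel (T : TopologicalSpace X) (A : Set X) : Prop :=
  letI := T
  ∀ 𝒰 : Set (Set X), (∀ U ∈ 𝒰, SemiOpen T U) → A ⊆ ⋃₀ 𝒰 →
    ∃ 𝒱 ⊆ 𝒰, 𝒱.Finite ∧ A ⊆ ⋃ V ∈ 𝒱, closure V

/-- `A` is s-closed relative to `X`: every cover of `A` by semi-open sets of `X`
has a finite subfamily whose semi-closures cover `A`. -/
def SmallSClosedRel (T : TopologicalSpace X) (A : Set X) : Prop :=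
  ∀ 𝒰 : Set (Set X), (∀ U ∈ 𝒰, SemiOpen T U) → A ⊆ ⋃₀ 𝒰 →
    ∃ 𝒱 ⊆ 𝒰, 𝒱.Finite ∧ A ⊆ ⋃ V ∈ 𝒱, sCl T V

/-- Locally S-closed: every point has a neighbourhood which is S-closed relative to `X`. -/
def LocallySClosed (T : TopologicalSpace X) : Prop :=
  ∀ x : X, ∃ N ∈ @nhds X T x, SClosedRel T N

/-- Locally s-closed: every point has a neighbourhood which is s-closed relative to `X`. -/
def LocallySmallSClosed (T : TopologicalSpace X) : Prop :=
  ∀ x : X, ∃ N ∈ @nhds X T x, SmallSClosedRel T N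

/-- para-S-closed: every semi-open cover has a locally finite refinement by
semi-open sets whose union is dense. -/
def ParaSClosed (T : TopologicalSpace X) : Prop :=
  letI := T
  ∀ 𝒰 : Set (Set X), (∀ U ∈ 𝒰, SemiOpen T U) → ⋃₀ 𝒰 = univ →
    ∃ 𝒱 : Set (Set X), (∀ V ∈ 𝒱, SemiOpen T V) ∧ LocFinite T 𝒱 ∧ Refines 𝒱 𝒰 ∧
      closure (⋃₀ 𝒱) = univ

/-- para-rc-Lindelöf: every regular closed cover has a locally countable
refinement by regular closed sets. -/
def ParaRcLindelof (T : TopologicalSpace X) : Prop :=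
  ∀ 𝒰 : Set (Set X), (∀ U ∈ 𝒰, RegClosed T U) → ⋃₀ 𝒰 = univ →
    ∃ 𝒱 : Set (Set X), (∀ V ∈ 𝒱, RegClosed T V) ∧ LocCountable T 𝒱 ∧ Refines 𝒱 𝒰 ∧
      ⋃₀ 𝒱 = univ

/-- α-subparacompact: every α-open cover has a σ-discrete closed refinement covering `X`. -/
def AlphaSubparacompact (T : TopologicalSpace X) : Prop :=
  ∀ 𝒰 : Set (Set X), (∀ U ∈ 𝒰, AlphaOpen T U) → ⋃₀ 𝒰 = univ →
    ∃ 𝒱 : Set (Set X), (∀ V ∈ 𝒱, @IsClosed X T V) ∧ SigmaDiscrete T 𝒱 ∧ Refines 𝒱 𝒰 ∧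
      ⋃₀ 𝒱 = univ

/-- gα-closed: `Cl_α A ⊆ U` whenever `A ⊆ U` with `U` α-open. -/
def GAlphaClosed (T : TopologicalSpace X) (A : Set X) : Prop :=
  ∀ U : Set X, AlphaOpen T U → A ⊆ U → @closure X (alphaTop T) A ⊆ U

/-- α-paracompact: every α-open cover has a locally finite open refinement. -/
def AlphaParacompact (T : TopologicalSpace X) : Prop :=
  ∀ 𝒰 : Set (Set X), (∀ U ∈ 𝒰, AlphaOpen T U) → ⋃₀ 𝒰 = univ →
    ∃ 𝒱 : Set (Set X), (∀ V ∈ 𝒱, T.IsOpen V) ∧ LocFinite T 𝒱 ∧ Refines 𝒱 𝒰 ∧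
      ⋃₀ 𝒱 = univ

/-- `SO(X, 𝒯^α) = SO(X, 𝒯)`. -/
theorem semiOpen_alphaTop_eq (T : TopologicalSpace X) :
    {A : Set X | SemiOpen (alphaTop T) A} = {A : Set X | SemiOpen T A} := by
  letI := T
  -- The α-topology is finer than T.
  have hle : alphaTop T ≤ T := by
    intro A hA
    show A ⊆ interior (closure (interior A))
    rw [hA.interior_eq]
    exact interior_maximal subset_closure hA
  -- α-open sets satisfy the defining inclusion.
  have hAlpha : ∀ A : Set X, @IsOpen X (alphaTop T) A → A ⊆ interior (closure (interior A)) :=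
    fun A hA => hA
  -- T-closure of a T-open set is contained in its α-closure.
  have hclOpen : ∀ U : Set X, IsOpen U → closure U ⊆ @closure X (alphaTop T) U := by
    intro U hU x hx
    rw [@mem_closure_iff X (alphaTop T) x U]
    intro V hV hxV
    have hx2 : x ∈ interior (closure (interior V)) := hAlpha V hV hxV
    obtain ⟨y, hyI, hyU⟩ := (mem_closure_iff.mp hx) _ isOpen_interior hx2
    have hyCl : y ∈ closure (interior V) := interior_subset hyI
    obtain ⟨z, hzU, hzI⟩ := (mem_closure_iff.mp hyCl) _ hU hyU
    exact ⟨z, interior_subset hzI, hzU⟩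
  -- α-interior is contained in Int (Cl (Int A)).
  have hintAlpha : ∀ A : Set X, @interior X (alphaTop T) A ⊆
      interior (closure (interior A)) := by
    intro A
    have h1 : @IsOpen X (alphaTop T) (@interior X (alphaTop T) A) :=
      @isOpen_interior X (alphaTop T) A
    have h2 := hAlpha _ h1
    refine h2.trans (interior_mono (closure_mono (interior_mono ?_)))
    exact @interior_subset X (alphaTop T) A
  -- T-interior is contained in α-interior.
  have hintLe : ∀ A : Set X, interior A ⊆ @interior X (alphaTop T) A := by
    intro A
    exact @interior_maximal X (alphaTop T) A _ interior_subset (hle _ isOpen_interior)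
  ext A
  simp only [mem_setOf_eq, SemiOpen]
  constructor
  · intro h
    calc A ⊆ @closure X (alphaTop T) (@interior X (alphaTop T) A) := h
      _ ⊆ closure (@interior X (alphaTop T) A) := closure.mono hle
      _ ⊆ closure (interior (closure (interior A))) := closure_mono (hintAlpha A)
      _ ⊆ closure (closure (interior A)) := closure_mono interior_subset
      _ = closure (interior A) := closure_closure
  · intro h
    calc A ⊆ closure (interior A) := h
      _ ⊆ @closure X (alphaTop T) (interior A) := hclOpen _ isOpen_interior
      _ ⊆ @closure X (alphaTop T) (@interior X (alphaTop T) A) :=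
        @closure_mono X (alphaTop T) _ _ (hintLe A)
end

section
/- For any topological space (X, 𝒯) and any subset A ⊆ X, the semi-closure of A in (X, 𝒯^α) equals the semi-closure of A in (X, 𝒯), i.e. sCl_α A = sCl A. -/
open Set TopologicalSpace

universe u v

variable {X : Type u} {Y : Type v}

lemma alphaTop_le (T : TopologicalSpace X) : alphaTop T ≤ T := by
  letI := T
  intro U hU
  show U ⊆ interior (closure (interior U))
  rw [hU.interior_eq]
  exact hU.subset_interior_iff.mpr subset_closure

/-- τ-interior is contained in α-interior. -/
lemma interior_subset_alpha_interior (T : TopologicalSpace X) (A : Set X) :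
    @interior X T A ⊆ @interior X (alphaTop T) A :=
  @interior_maximal X (alphaTop T) _ _ (@interior_subset X T _)
    (alphaTop_le T _ (@isOpen_interior X T _))

/-- α-closure is contained in τ-closure. -/
lemma alpha_closure_subset_closure (T : TopologicalSpace X) (A : Set X) :
    @closure X (alphaTop T) A ⊆ @closure X T A := by
  refine @closure_minimal X (alphaTop T) _ _ (@subset_closure X T _) ?_
  rw [← @isOpen_compl_iff X _ (alphaTop T)]
  exact alphaTop_le T _ (by rw [@isOpen_compl_iff X _ T]; exact @isClosed_closure X T _)

/-- For a τ-open set, τ-closure is contained in α-closure. -/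
lemma closure_open_subset_alpha_closure (T : TopologicalSpace X) {U : Set X}
    (hU : T.IsOpen U) : @closure X T U ⊆ @closure X (alphaTop T) U := by
  letI := T
  intro x hx
  rw [@mem_closure_iff X (alphaTop T) _ _]
  intro V hV hxV
  -- V is α-open: V ⊆ Int (Cl (Int V))
  have hVsub : V ⊆ interior (closure (interior V)) := hV
  have hx' : x ∈ interior (closure (interior V)) := hVsub hxV
  have h1 : (interior (closure (interior V)) ∩ U).Nonempty := by
    rw [mem_closure_iff] at hx
    exact hx _ isOpen_interior hx'
  obtain ⟨y, hy1, hy2⟩ := h1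
  have hy3 : y ∈ closure (interior V) := interior_subset hy1
  have : (U ∩ interior V).Nonempty := by
    rw [mem_closure_iff] at hy3
    exact hy3 U hU hy2
  obtain ⟨z, hz1, hz2⟩ := this
  exact ⟨z, interior_subset hz2, hz1⟩

/-- Semi-open sets of the α-topology are exactly the semi-open sets of `T`. -/
lemma semiOpen_alphaTop_iff (T : TopologicalSpace X) (A : Set X) :
    SemiOpen (alphaTop T) A ↔ SemiOpen T A := by
  letI := T
  constructor
  · intro h
    -- A ⊆ Cl_α (Int_α A) ⊆ Cl (Int_α A); Int_α A ⊆ Cl (Int A)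
    have h2 : A ⊆ @closure X T (@interior X (alphaTop T) A) :=
      h.trans (alpha_closure_subset_closure T _)
    have h3 : @interior X (alphaTop T) A ⊆ closure (interior A) := by
      have hao : (alphaTop T).IsOpen (@interior X (alphaTop T) A) :=
        @isOpen_interior X (alphaTop T) _
      have h4 : @interior X (alphaTop T) A ⊆
          interior (closure (interior (@interior X (alphaTop T) A))) := hao
      refine h4.trans ?_
      refine interior_subset.trans (closure_mono (interior_mono ?_))
      exact @interior_subset X (alphaTop T) _
    calc A ⊆ closure (@interior X (alphaTop T) A) := h2
      _ ⊆ closure (closure (interior A)) := closure_mono h3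
      _ = closure (interior A) := closure_closure
  · intro h
    show A ⊆ @closure X (alphaTop T) (@interior X (alphaTop T) A)
    calc A ⊆ closure (interior A) := h
      _ ⊆ @closure X (alphaTop T) (interior A) :=
          closure_open_subset_alpha_closure T isOpen_interior
      _ ⊆ @closure X (alphaTop T) (@interior X (alphaTop T) A) :=
          @closure_mono X (alphaTop T) _ _ (interior_subset_alpha_interior T A)

/-- `sCl_α A = sCl A` for every `A ⊆ X`. -/
theorem sCl_alphaTop_eq (T : TopologicalSpace X) (A : Set X) :
    sCl (alphaTop T) A = sCl T A := by
  unfold sCl SemiClosed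
  ext C
  simp only [mem_sInter, mem_setOf_eq]
  simp only [mem_setOf_eq, semiOpen_alphaTop_iff]
end

section
/- For any topological space (X, 𝒯), the family of regular closed sets of (X, 𝒯^α) coincides with the family of regular closed sets of (X, 𝒯), i.e. RC(X, 𝒯^α) = RC(X, 𝒯). -/
open Set TopologicalSpace

universe u v

variable {X : Type u} {Y : Type v}

/-- `RC(X, 𝒯^α) = RC(X, 𝒯)`. -/
theorem regClosed_alphaTop_eq (T : TopologicalSpace X) :
    {A : Set X | RegClosed (alphaTop T) A} = {A : Set X | RegClosed T A} := by
  letI := T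
  have hle : ∀ U : Set X, T.IsOpen U → (alphaTop T).IsOpen U := by
    intro U hU
    have hU' : IsOpen U := hU
    show U ⊆ interior (closure (interior U))
    rw [hU'.interior_eq]
    exact interior_maximal subset_closure hU'
  have hInt : ∀ A : Set X, interior A ⊆ @interior X (alphaTop T) A := fun A =>
    @interior_maximal X (alphaTop T) A (interior A) interior_subset (hle _ isOpen_interior)
  have hClLe : ∀ A : Set X, @closure X (alphaTop T) A ⊆ closure A := by
    intro A
    refine @closure_minimal X (alphaTop T) A (closure A) subset_closure ?_
    exact (@isOpen_compl_iff X (closure A) (alphaTop T)).mp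
      (hle _ isClosed_closure.isOpen_compl)
  have hClInt : ∀ A : Set X, closure (@interior X (alphaTop T) A) ⊆ closure (interior A) := by
    intro A
    have h1 : (alphaTop T).IsOpen (@interior X (alphaTop T) A) :=
      @isOpen_interior X (alphaTop T) A
    have h2 : @interior X (alphaTop T) A ⊆ closure (interior A) := by
      have h3 : @interior X (alphaTop T) A ⊆
          interior (closure (interior (@interior X (alphaTop T) A))) := h1
      refine h3.trans (interior_subset.trans (closure_mono (interior_mono ?_)))
      exact @interior_subset X (alphaTop T) A
    exact closure_minimal h2 isClosed_closure
  have hClOpen : ∀ U : Set X, IsOpen U → closure U ⊆ @closure X (alphaTop T) U := by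
    intro U hU x hx
    rw [@mem_closure_iff X (alphaTop T) x U]
    intro o ho hxo
    have hxo' : x ∈ interior (closure (interior o)) := ho hxo
    obtain ⟨y, hy1, hy2⟩ := (mem_closure_iff.mp hx) _ isOpen_interior hxo'
    have hy3 : y ∈ closure (interior o) := interior_subset hy1
    obtain ⟨z, hz1, hz2⟩ := (mem_closure_iff.mp hy3) U hU hy2
    exact ⟨z, interior_subset hz2, hz1⟩
  ext A
  simp only [mem_setOf_eq, RegClosed]
  constructor
  · intro h
    apply subset_antisymm
    · intro x hx
      rw [h] at hx
      exact hClInt A (hClLe _ hx)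
    · intro x hx
      rw [h]
      have hm := @closure_mono X (alphaTop T) (interior A) (@interior X (alphaTop T) A) (hInt A)
      exact hm (hClOpen _ isOpen_interior hx)
  · intro h
    apply subset_antisymm
    · intro x hx
      rw [h] at hx
      have hm := @closure_mono X (alphaTop T) (interior A) (@interior X (alphaTop T) A) (hInt A)
      exact hm (hClOpen _ isOpen_interior hx)
    · intro x hx
      have hx2 : x ∈ closure (interior A) := hClInt A (hClLe _ hx)
      rwa [← h] at hx2
end

section
/- A topological space (X, 𝒯^α) is rc-Lindelöf if and only if (X, 𝒯) is rc-Lindelöf. -/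
open Set TopologicalSpace

universe u v

variable {X : Type u} {Y : Type v}

section AuxAlpha

variable (T : TopologicalSpace X)


lemma gen_interior_subset (T' : TopologicalSpace X) (S : Set X) :
    @interior X T' S ⊆ S := by
  letI := T'; exact interior_subset

lemma gen_isOpen_interior (T' : TopologicalSpace X) (S : Set X) :
    @IsOpen X T' (@interior X T' S) := by
  letI := T'; exact isOpen_interior

lemma gen_interior_maximal (T' : TopologicalSpace X) {S U : Set X} (h : U ⊆ S)
    (hU : @IsOpen X T' U) : U ⊆ @interior X T' S := by
  letI := T'; exact interior_maximal h hU

lemma gen_closure_eq (T' : TopologicalSpace X) (S : Set X) :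
    @closure X T' S = (@interior X T' Sᶜ)ᶜ := by
  letI := T'; exact closure_eq_compl_interior_compl

lemma alphaTop_isOpen_iff (A : Set X) :
    @IsOpen X (alphaTop T) A ↔ (letI := T; A ⊆ interior (closure (interior A))) :=
  Iff.rfl

lemma interior_inter_alpha (S : Set X) :
    letI := T
    interior (S ∩ interior (closure (interior S))) = interior S := by
  letI := T
  rw [interior_inter, interior_interior]
  exact subset_antisymm inter_subset_left
    (subset_inter Subset.rfl (interior_maximal subset_closure isOpen_interior))

lemma alphaTop_interior (S : Set X) :
    letI := T
    @interior X (alphaTop T) S = S ∩ interior (closure (interior S)) := by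
  letI := T
  apply subset_antisymm
  · intro x hx
    have hsub : @interior X (alphaTop T) S ⊆ S := gen_interior_subset (alphaTop T) S
    have h1 : @interior X (alphaTop T) S ⊆
        interior (closure (interior (@interior X (alphaTop T) S))) :=
      gen_isOpen_interior (alphaTop T) S
    exact ⟨hsub hx, interior_mono (closure_mono (interior_mono hsub)) (h1 hx)⟩
  · apply gen_interior_maximal (alphaTop T) inter_subset_left
    show S ∩ interior (closure (interior S)) ⊆
      interior (closure (interior (S ∩ interior (closure (interior S)))))
    rw [interior_inter_alpha]
    exact inter_subset_right

lemma alphaTop_closure (S : Set X) :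
    letI := T
    @closure X (alphaTop T) S = S ∪ closure (interior (closure S)) := by
  letI := T
  rw [gen_closure_eq (alphaTop T), alphaTop_interior, compl_inter,
    compl_compl, interior_compl, closure_compl, interior_compl, compl_compl]

lemma regClosed_alphaTop_iff (A : Set X) :
    RegClosed (alphaTop T) A ↔ RegClosed T A := by
  letI := T
  have key : @closure X (alphaTop T) (@interior X (alphaTop T) A) =
      (A ∩ interior (closure (interior A))) ∪ closure (interior A) := by
    rw [alphaTop_interior, alphaTop_closure]
    have hClB : closure (A ∩ interior (closure (interior A))) = closure (interior A) := by
      apply subset_antisymm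
      · calc closure (A ∩ interior (closure (interior A)))
            ⊆ closure (closure (interior A)) :=
              closure_mono (inter_subset_right.trans interior_subset)
          _ = closure (interior A) := closure_closure
      · exact closure_mono (subset_inter interior_subset
          (interior_maximal subset_closure isOpen_interior))
    rw [hClB]
    congr 1
    apply subset_antisymm
    · calc closure (interior (closure (interior A)))
          ⊆ closure (closure (interior A)) := closure_mono interior_subset
        _ = closure (interior A) := closure_closure
    · exact closure_mono (interior_maximal subset_closure isOpen_interior)
  unfold RegClosed
  rw [key]
  constructor
  · intro h
    apply subset_antisymm
    · intro x hx
      rw [h] at hx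
      rcases hx with h1 | h1
      · exact interior_subset h1.2
      · exact h1
    · nth_rewrite 2 [h]
      exact subset_union_right
  · intro h
    rw [← h]
    exact (union_eq_self_of_subset_left inter_subset_left).symm

end AuxAlpha

/-- `(X, 𝒯^α)` is rc-Lindelöf iff `(X, 𝒯)` is rc-Lindelöf. -/
theorem rcLindelof_alphaTop_iff (T : TopologicalSpace X) :
    RcLindelof (alphaTop T) ↔ RcLindelof T := by
  constructor
  · intro h 𝒰 hreg hcov
    exact h 𝒰 (fun U hU => (regClosed_alphaTop_iff T U).mpr (hreg U hU)) hcov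
  · intro h 𝒰 hreg hcov
    exact h 𝒰 (fun U hU => (regClosed_alphaTop_iff T U).mp (hreg U hU)) hcov
end

section
/- A topological space (X, 𝒯^α) is sg-compact if and only if (X, 𝒯) is sg-compact. -/
open Set TopologicalSpace

universe u v

variable {X : Type u} {Y : Type v}

/-- The α-interior of `A` is `A ∩ Int Cl Int A`. -/
lemma interior_alphaTop (T : TopologicalSpace X) (A : Set X) :
    @interior X (alphaTop T) A =
      A ∩ (letI := T; interior (closure (interior A))) := by
  letI := T
  apply subset_antisymm
  · intro x hx
    have hsub : @interior X (alphaTop T) A ⊆ A := @interior_subset X (alphaTop T) A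
    refine ⟨hsub hx, ?_⟩
    have hopen : @IsOpen X (alphaTop T) (@interior X (alphaTop T) A) :=
      @isOpen_interior X (alphaTop T) A
    have h1 : @interior X (alphaTop T) A ⊆
        interior (closure (interior (@interior X (alphaTop T) A))) := hopen
    have h2 : interior (closure (interior (@interior X (alphaTop T) A))) ⊆
        interior (closure (interior A)) :=
      interior_mono (closure_mono (interior_mono (@interior_subset X (alphaTop T) A)))
    exact h2 (h1 hx)
  · apply @interior_maximal X (alphaTop T) A _ inter_subset_left
    show A ∩ interior (closure (interior A)) ⊆
      interior (closure (interior (A ∩ interior (closure (interior A)))))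
    have hIA : interior A ⊆ A ∩ interior (closure (interior A)) := fun x hx =>
      ⟨interior_subset hx, interior_maximal subset_closure isOpen_interior hx⟩
    have h3 : interior A ⊆ interior (A ∩ interior (closure (interior A))) :=
      interior_maximal hIA isOpen_interior
    intro x hx
    exact interior_mono (closure_mono h3) hx.2

/-- sg-open sets coincide for `𝒯` and `𝒯^α`. -/
lemma sgOpen_alphaTop (T : TopologicalSpace X) :
    SgOpen (alphaTop T) = SgOpen T := by
  have hso : SemiOpen (alphaTop T) = SemiOpen T :=
    funext fun A => propext (semiOpen_alphaTop_iff T A)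
  funext A
  simp only [SgOpen, SgClosed, sCl, SemiClosed, hso]

/-- `(X, 𝒯^α)` is sg-compact iff `(X, 𝒯)` is sg-compact. -/
theorem sgCompact_alphaTop_iff (T : TopologicalSpace X) :
    SgCompact (alphaTop T) ↔ SgCompact T := by
  simp only [SgCompact, sgOpen_alphaTop]
end

section
/- For a topological space (X, 𝒯), the following are equivalent: (a) (X, 𝒯) is para-S-closed; (b) every cover of X by regular closed sets of (X, 𝒯) has a locally finite refinement consisting of regular closed sets of (X, 𝒯); (c) every cover of X by regular closed sets of (X, 𝒯^α) has a locally finite refinement consisting of regular closed sets of (X, 𝒯^α); (d) (X, 𝒯^α) is para-S-closed. -/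
open Set TopologicalSpace

universe u v

variable {X : Type u} {Y : Type v}

section Aux1
variable {X : Type u}

theorem semiOpen_of_regClosed [T : TopologicalSpace X] {A : Set X} (h : RegClosed T A) :
    SemiOpen T A := h.le

theorem closure_eq_of_regClosed [T : TopologicalSpace X] {A : Set X} (h : RegClosed T A) :
    closure A = A := by
  conv_lhs => rw [h]
  rw [closure_closure]; exact h.symm

theorem regClosed_closure_of_semiOpen [T : TopologicalSpace X] {A : Set X}
    (h : SemiOpen T A) : RegClosed T (closure A) := by
  apply subset_antisymm
  · calc closure A ⊆ closure (closure (interior A)) := closure_mono h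
      _ = closure (interior A) := closure_closure
      _ ⊆ closure (interior (closure A)) := closure_mono (interior_mono subset_closure)
  · exact closure_minimal interior_subset isClosed_closure

theorem semiOpen_inter_open [T : TopologicalSpace X] {U B : Set X}
    (hU : IsOpen U) (hB : SemiOpen T B) : SemiOpen T (U ∩ B) := by
  intro x hx
  have h1 : U ∩ closure (interior B) ⊆ closure (U ∩ interior B) := hU.inter_closure
  have h2 : U ∩ interior B ⊆ interior (U ∩ B) :=
    interior_maximal (inter_subset_inter_right U interior_subset) (hU.inter isOpen_interior)
  exact closure_mono h2 (h1 ⟨hx.1, hB hx.2⟩)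

theorem nonempty_inter_of_open_closure [T : TopologicalSpace X] {G S : Set X}
    (hG : IsOpen G) (h : (G ∩ closure S).Nonempty) : (G ∩ S).Nonempty :=
  closure_nonempty_iff.mp (h.mono hG.inter_closure)

theorem open_subset_closure_inter [T : TopologicalSpace X] {G B : Set X}
    (hG : IsOpen G) (hGB : G ⊆ closure B) : G ⊆ closure (G ∩ B) :=
  fun x hx => hG.inter_closure ⟨hx, hGB hx⟩

theorem nonempty_inter_closure_left [T : TopologicalSpace X] {G S : Set X}
    (hG : IsOpen G) (h : (closure S ∩ G).Nonempty) : (S ∩ G).Nonempty := by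
  rw [inter_comm] at h ⊢
  exact nonempty_inter_of_open_closure hG h

end Aux1
section Aux2
variable {X : Type u} (T : TopologicalSpace X)

theorem alphaOpen_of_isOpen {U : Set X} (h : T.IsOpen U) : (alphaTop T).IsOpen U := by
  letI := T
  show U ⊆ interior (closure (interior U))
  have h' : IsOpen U := h
  rw [h'.interior_eq]
  exact interior_maximal subset_closure h'

theorem interior_alpha_subset (A : Set X) :
    @interior X (alphaTop T) A ⊆
      @interior X T (@closure X T (@interior X T A)) := by
  letI := T
  have h1 : (alphaTop T).IsOpen (@interior X (alphaTop T) A) := @isOpen_interior X (alphaTop T) A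
  have h2 : @interior X (alphaTop T) A ⊆
      interior (closure (interior (@interior X (alphaTop T) A))) := h1
  exact h2.trans (interior_mono (closure_mono (interior_mono (@interior_subset X (alphaTop T) A))))

theorem interior_subset_alpha (A : Set X) :
    @interior X T A ⊆ @interior X (alphaTop T) A :=
  @interior_maximal X (alphaTop T) A (@interior X T A) (@interior_subset X T A)
    (alphaOpen_of_isOpen T (@isOpen_interior X T A))

theorem closure_interior_alpha (A : Set X) :
    @closure X T (@interior X (alphaTop T) A) = @closure X T (@interior X T A) := by
  letI := T
  apply subset_antisymm
  · refine (closure_mono (interior_alpha_subset T A)).trans ?_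
    exact closure_minimal interior_subset isClosed_closure
  · exact closure_mono (interior_subset_alpha T A)

theorem semiOpen_interior_alpha (A : Set X) :
    SemiOpen T (@interior X (alphaTop T) A) := by
  letI := T
  have h2 : @interior X (alphaTop T) A ⊆
      interior (closure (interior (@interior X (alphaTop T) A))) :=
    (@isOpen_interior X (alphaTop T) A : (alphaTop T).IsOpen _)
  exact h2.trans interior_subset

theorem alpha_closure_eq_of_semiOpen {B : Set X} (hB : SemiOpen T B) :
    @closure X (alphaTop T) B = @closure X T B := by
  letI := T
  apply subset_antisymm
  · have hcl : @IsClosed X (alphaTop T) (closure B) :=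
      @IsClosed.mk X (alphaTop T) _ (alphaOpen_of_isOpen T isClosed_closure.isOpen_compl)
    exact @closure_minimal X (alphaTop T) B (closure B) subset_closure hcl
  · intro x hx
    rw [@mem_closure_iff X (alphaTop T) x B]
    intro o ho hxo
    have ho' : o ⊆ interior (closure (interior o)) := ho
    set G := interior (closure (interior o)) with hG
    have hGopen : IsOpen G := isOpen_interior
    have hxG : x ∈ G := ho' hxo
    have h1 : (G ∩ B).Nonempty := mem_closure_iff.mp hx G hGopen hxG
    have h2 : (G ∩ interior B).Nonempty :=
      nonempty_inter_of_open_closure hGopen (h1.mono (inter_subset_inter_right G hB))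
    have h3 : ((G ∩ interior B) ∩ interior o).Nonempty := by
      obtain ⟨y, hy⟩ := h2
      have hyCl : y ∈ closure (interior o) := interior_subset hy.1
      have := mem_closure_iff.mp hyCl (G ∩ interior B) (hGopen.inter isOpen_interior) hy
      exact this
    obtain ⟨z, ⟨⟨_, hzB⟩, hzo⟩⟩ := h3
    exact ⟨z, interior_subset hzo, interior_subset hzB⟩

theorem regClosed_alpha_iff (A : Set X) :
    RegClosed T A ↔ RegClosed (alphaTop T) A := by
  letI := T
  have key : @closure X (alphaTop T) (@interior X (alphaTop T) A) = closure (interior A) := by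
    rw [alpha_closure_eq_of_semiOpen T (semiOpen_interior_alpha T A),
      closure_interior_alpha T A]
  unfold RegClosed
  rw [key]

end Aux2
section Aux3
variable {X : Type u} (T : TopologicalSpace X)

theorem mem_nhds_alpha {x : X} {N : Set X} (hN : N ∈ @nhds X T x) :
    N ∈ @nhds X (alphaTop T) x := by
  letI := T
  obtain ⟨O, hON, hO, hxO⟩ := mem_nhds_iff.mp hN
  exact (@mem_nhds_iff X (alphaTop T) x N).mpr ⟨O, hON, alphaOpen_of_isOpen T hO, hxO⟩

theorem locFinite_alpha_of_locFinite {𝒱 : Set (Set X)} (h : LocFinite T 𝒱) :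
    LocFinite (alphaTop T) 𝒱 := fun x => by
  obtain ⟨N, hN, hfin⟩ := h x
  exact ⟨N, mem_nhds_alpha T hN, hfin⟩

theorem exists_T_nhd {x : X} {N : Set X} (hN : N ∈ @nhds X (alphaTop T) x) :
    ∃ G ∈ @nhds X T x,
      ∀ V : Set X, RegClosed T V → (V ∩ G).Nonempty → (V ∩ N).Nonempty := by
  letI := T
  obtain ⟨o, hoN, ho, hxo⟩ := (@mem_nhds_iff X (alphaTop T) x N).mp hN
  have ho' : o ⊆ interior (closure (interior o)) := ho
  set G := interior (closure (interior o)) with hGdef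
  refine ⟨G, isOpen_interior.mem_nhds (ho' hxo), ?_⟩
  intro V hV hne
  have hV' : V = closure (interior V) := hV
  have h1 : (G ∩ closure (interior V)).Nonempty := by
    rwa [hV', inter_comm] at hne
  have h2 : (G ∩ interior V).Nonempty := nonempty_inter_of_open_closure isOpen_interior h1
  obtain ⟨y, hy⟩ := h2
  have hyCl : y ∈ closure (interior o) := interior_subset hy.1
  obtain ⟨z, hz⟩ := mem_closure_iff.mp hyCl (G ∩ interior V)
    (isOpen_interior.inter isOpen_interior) hy
  exact ⟨z, interior_subset hz.1.2, hoN (interior_subset hz.2)⟩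

theorem locFinite_of_locFinite_alpha {𝒱 : Set (Set X)}
    (hRC : ∀ V ∈ 𝒱, RegClosed T V) (h : LocFinite (alphaTop T) 𝒱) :
    LocFinite T 𝒱 := fun x => by
  obtain ⟨N, hN, hfin⟩ := h x
  obtain ⟨G, hG, hGN⟩ := exists_T_nhd T hN
  refine ⟨G, hG, hfin.subset ?_⟩
  rintro V ⟨hV, hne⟩
  exact ⟨hV, hGN V (hRC V hV) hne⟩

theorem locFinite_closure_image [T : TopologicalSpace X] {𝒱 : Set (Set X)}
    (h : LocFinite T 𝒱) : LocFinite T (closure '' 𝒱) := fun x => by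
  obtain ⟨N, hN, hfin⟩ := h x
  obtain ⟨O, hON, hO, hxO⟩ := mem_nhds_iff.mp hN
  refine ⟨O, hO.mem_nhds hxO, ((hfin.image closure).subset ?_)⟩
  rintro W ⟨⟨V, hV, rfl⟩, hne⟩
  have hne' : (closure V ∩ O).Nonempty := hne
  have : (V ∩ O).Nonempty := nonempty_inter_closure_left hO hne'
  exact ⟨V, ⟨hV, this.mono (inter_subset_inter_right V hON)⟩, rfl⟩

theorem isClosed_biUnion_closure [T : TopologicalSpace X] {𝒱 : Set (Set X)}
    (h : LocFinite T 𝒱) : IsClosed (⋃ V ∈ 𝒱, closure V) := by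
  have hlf : LocallyFinite (fun V : 𝒱 => closure (V : Set X)) := by
    intro x
    obtain ⟨N, hN, hfin⟩ := h x
    obtain ⟨O, hON, hO, hxO⟩ := mem_nhds_iff.mp hN
    refine ⟨O, hO.mem_nhds hxO, ?_⟩
    have hsub : {i : 𝒱 | (closure (i : Set X) ∩ O).Nonempty} ⊆
        Subtype.val ⁻¹' {V ∈ 𝒱 | (V ∩ N).Nonempty} := by
      rintro ⟨V, hV⟩ hne
      have hne' : (closure V ∩ O).Nonempty := hne
      have : (V ∩ O).Nonempty := nonempty_inter_closure_left hO hne'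
      exact ⟨hV, this.mono (inter_subset_inter_right V hON)⟩
    exact (hfin.preimage Subtype.val_injective.injOn).subset hsub
  have hcl := hlf.isClosed_iUnion fun i => isClosed_closure
  rw [biUnion_eq_iUnion 𝒱 (fun V _ => closure V)]
  exact hcl

end Aux3
section Aux4
variable {X : Type u}

theorem paraSClosed_iff_rc (T : TopologicalSpace X) :
    ParaSClosed T ↔
      ∀ 𝒰 : Set (Set X), (∀ U ∈ 𝒰, RegClosed T U) → ⋃₀ 𝒰 = univ →
        ∃ 𝒱 : Set (Set X), (∀ V ∈ 𝒱, RegClosed T V) ∧ LocFinite T 𝒱 ∧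
          Refines 𝒱 𝒰 ∧ ⋃₀ 𝒱 = univ := by
  letI := T
  constructor
  · intro hP 𝒰 hRC hcov
    obtain ⟨𝒱, hso, hlf, href, hdense⟩ :=
      hP 𝒰 (fun U hU => semiOpen_of_regClosed (hRC U hU)) hcov
    refine ⟨closure '' 𝒱, ?_, locFinite_closure_image hlf, ?_, ?_⟩
    · rintro W ⟨V, hV, rfl⟩
      exact regClosed_closure_of_semiOpen (hso V hV)
    · rintro W ⟨V, hV, rfl⟩
      obtain ⟨U, hU, hVU⟩ := href V hV
      exact ⟨U, hU, (closure_mono hVU).trans (closure_eq_of_regClosed (hRC U hU)).le⟩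
    · have h1 : ⋃₀ 𝒱 ⊆ ⋃ V ∈ 𝒱, closure V :=
        sUnion_subset fun V hV => subset_closure.trans (subset_biUnion_of_mem hV)
      have h2 : closure (⋃₀ 𝒱) ⊆ ⋃ V ∈ 𝒱, closure V :=
        closure_minimal h1 (isClosed_biUnion_closure hlf)
      rw [sUnion_image]
      exact eq_univ_of_univ_subset (hdense ▸ h2)
  · intro hR 𝒰 hso hcov
    have hRC' : ∀ W ∈ closure '' 𝒰, RegClosed T W := by
      rintro W ⟨U, hU, rfl⟩
      exact regClosed_closure_of_semiOpen (hso U hU)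
    have hcov' : ⋃₀ (closure '' 𝒰) = univ := by
      apply eq_univ_of_univ_subset
      rw [← hcov]
      exact sUnion_subset fun U hU =>
        subset_closure.trans (subset_sUnion_of_mem (mem_image_of_mem _ hU))
    obtain ⟨𝒱, hVrc, hlf, href, hVcov⟩ := hR _ hRC' hcov'
    have hch : ∀ V : 𝒱, ∃ U, U ∈ 𝒰 ∧ (V : Set X) ⊆ closure U := by
      intro V
      obtain ⟨W, hW, hVW⟩ := href V V.2
      obtain ⟨U, hU, rfl⟩ := hW
      exact ⟨U, hU, hVW⟩
    choose u hu hsub using hch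
    set g : 𝒱 → Set X := fun V => interior (V : Set X) ∩ u V with hg
    refine ⟨range g, ?_, ?_, ?_, ?_⟩
    · rintro W ⟨V, rfl⟩
      exact semiOpen_inter_open isOpen_interior (hso _ (hu V))
    · intro x
      obtain ⟨N, hN, hfin⟩ := hlf x
      refine ⟨N, hN, ?_⟩
      have hsub2 : {W ∈ range g | (W ∩ N).Nonempty} ⊆
          g '' (Subtype.val ⁻¹' {V ∈ 𝒱 | (V ∩ N).Nonempty}) := by
        rintro W ⟨⟨V, rfl⟩, hne⟩
        refine ⟨V, ⟨V.2, hne.mono (inter_subset_inter_left N ?_)⟩, rfl⟩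
        exact inter_subset_left.trans interior_subset
      exact (((hfin.preimage Subtype.val_injective.injOn).image g).subset hsub2)
    · rintro W ⟨V, rfl⟩
      exact ⟨u V, hu V, inter_subset_right⟩
    · have h1 : ∀ V : 𝒱, interior (V : Set X) ⊆ closure (g V) := fun V =>
        open_subset_closure_inter isOpen_interior (interior_subset.trans (hsub V))
      have h2 : (⋃ V : 𝒱, interior (V : Set X)) ⊆ closure (⋃₀ range g) :=
        iUnion_subset fun V => (h1 V).trans (closure_mono (subset_sUnion_of_mem ⟨V, rfl⟩))
      have h3 : closure (⋃ V : 𝒱, interior (V : Set X)) ⊆ closure (⋃₀ range g) :=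
        closure_minimal h2 isClosed_closure
      apply eq_univ_of_univ_subset
      refine subset_trans ?_ h3
      intro x _
      have hx : x ∈ ⋃₀ 𝒱 := by rw [hVcov]; trivial
      obtain ⟨V, hV, hxV⟩ := hx
      have hV' : (V : Set X) = closure (interior V) := hVrc V hV
      have : x ∈ closure (interior V) := hV' ▸ hxV
      exact closure_mono (subset_iUnion (fun V : 𝒱 => interior (V : Set X)) ⟨V, hV⟩) this

theorem rc_iff_rc_alpha (T : TopologicalSpace X) :
    (∀ 𝒰 : Set (Set X), (∀ U ∈ 𝒰, RegClosed T U) → ⋃₀ 𝒰 = univ →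
        ∃ 𝒱 : Set (Set X), (∀ V ∈ 𝒱, RegClosed T V) ∧ LocFinite T 𝒱 ∧
          Refines 𝒱 𝒰 ∧ ⋃₀ 𝒱 = univ) ↔
      (∀ 𝒰 : Set (Set X), (∀ U ∈ 𝒰, RegClosed (alphaTop T) U) → ⋃₀ 𝒰 = univ →
        ∃ 𝒱 : Set (Set X), (∀ V ∈ 𝒱, RegClosed (alphaTop T) V) ∧
          LocFinite (alphaTop T) 𝒱 ∧ Refines 𝒱 𝒰 ∧ ⋃₀ 𝒱 = univ) := by
  constructor
  · intro h 𝒰 hRC hcov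
    obtain ⟨𝒱, h1, h2, h3, h4⟩ :=
      h 𝒰 (fun U hU => (regClosed_alpha_iff T U).mpr (hRC U hU)) hcov
    exact ⟨𝒱, fun V hV => (regClosed_alpha_iff T V).mp (h1 V hV),
      locFinite_alpha_of_locFinite T h2, h3, h4⟩
  · intro h 𝒰 hRC hcov
    obtain ⟨𝒱, h1, h2, h3, h4⟩ :=
      h 𝒰 (fun U hU => (regClosed_alpha_iff T U).mp (hRC U hU)) hcov
    have h1' : ∀ V ∈ 𝒱, RegClosed T V := fun V hV => (regClosed_alpha_iff T V).mpr (h1 V hV)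
    exact ⟨𝒱, h1', locFinite_of_locFinite_alpha T h1' h2, h3, h4⟩

end Aux4
/-- the four conditions on para-S-closedness of `𝒯` and `𝒯^α` are
equivalent. -/
theorem paraSClosed_tfae (T : TopologicalSpace X) :
    List.TFAE
      [ ParaSClosed T,
        ∀ 𝒰 : Set (Set X), (∀ U ∈ 𝒰, RegClosed T U) → ⋃₀ 𝒰 = univ →
          ∃ 𝒱 : Set (Set X), (∀ V ∈ 𝒱, RegClosed T V) ∧ LocFinite T 𝒱 ∧
            Refines 𝒱 𝒰 ∧ ⋃₀ 𝒱 = univ,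
        ∀ 𝒰 : Set (Set X), (∀ U ∈ 𝒰, RegClosed (alphaTop T) U) → ⋃₀ 𝒰 = univ →
          ∃ 𝒱 : Set (Set X), (∀ V ∈ 𝒱, RegClosed (alphaTop T) V) ∧
            LocFinite (alphaTop T) 𝒱 ∧ Refines 𝒱 𝒰 ∧ ⋃₀ 𝒱 = univ,
        ParaSClosed (alphaTop T) ] := by
  tfae_have 1 ↔ 2 := paraSClosed_iff_rc T
  tfae_have 2 ↔ 3 := rc_iff_rc_alpha T
  tfae_have 4 ↔ 3 := paraSClosed_iff_rc (alphaTop T)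
  tfae_finish
end
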